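/- arXiv:2304.03920 — 6 statements merged into one kernel-verified Lean document; each statement's English description precedes it below -/
import Mathlib

section
/- Fix r > 0 and define γ₂(t) = r²(1+it)²/(1 + r²(1+t²)) for t ∈ ℝ (this is the image under z ↦ z/(1+|z|) of the parabola with focus 0 and directrix t ↦ 2r²(1+it)). Let q = −1/(1+r²). Then for all t ∈ ℝ, |γ₂(t) − q| + |γ₂(t)| = (1+2r²)/(1+r²). In particular, γ₂ traces (part of) an ellipse with foci 0 and q. -/
open Complex

/-- For `γ₂(t) = r²(1+it)²/(1+r²(1+t²))` and `q = −1/(1+r²)`, the sum of distances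
from `γ₂(t)` to `q` and to the origin is the constant `(1+2r²)/(1+r²)`;
hence `γ₂` traces part of an ellipse with foci `0` and `q`. -/
theorem image_parabola_is_ellipse (r : ℝ) (hr : 0 < r) (t : ℝ) :
    ‖(r ^ 2 * (1 + t * Complex.I) ^ 2) / (1 + r ^ 2 * (1 + t ^ 2)) -
        (-1 / (1 + r ^ 2))‖ +
      ‖(r ^ 2 * (1 + t * Complex.I) ^ 2) / (1 + r ^ 2 * (1 + t ^ 2))‖ =
      (1 + 2 * r ^ 2) / (1 + r ^ 2) := by
  have hD : (0:ℝ) < 1 + r ^ 2 * (1 + t ^ 2) := by positivity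
  have hR : (0:ℝ) < 1 + r ^ 2 := by positivity
  have hDc : ((1:ℂ) + (r:ℂ) ^ 2 * (1 + (t:ℂ) ^ 2)) = ((1 + r ^ 2 * (1 + t ^ 2) : ℝ) : ℂ) := by
    push_cast; ring
  have hDc0 : ((1:ℂ) + (r:ℂ) ^ 2 * (1 + (t:ℂ) ^ 2)) ≠ 0 := by
    rw [hDc]; exact_mod_cast hD.ne'
  have hRc0 : ((1:ℂ) + (r:ℂ) ^ 2) ≠ 0 := by
    have : ((1:ℂ) + (r:ℂ) ^ 2) = ((1 + r ^ 2 : ℝ) : ℂ) := by push_cast; ring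
    rw [this]; exact_mod_cast hR.ne'
  have h1 : ‖(r ^ 2 * (1 + t * Complex.I) ^ 2) / (1 + r ^ 2 * (1 + t ^ 2))‖ =
      r ^ 2 * (1 + t ^ 2) / (1 + r ^ 2 * (1 + t ^ 2)) := by
    rw [norm_div, hDc, Complex.norm_real, Real.norm_eq_abs, abs_of_pos hD]
    congr 1
    rw [norm_mul, norm_pow, norm_pow]
    have h2 : ‖(1 + t * Complex.I)‖ ^ 2 = 1 + t ^ 2 := by
      rw [← Complex.normSq_eq_norm_sq]
      simp [Complex.normSq_apply]; ring
    rw [h2, Complex.norm_real, Real.norm_eq_abs, abs_of_pos hr]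
  have key : (r ^ 2 * (1 + t * Complex.I) ^ 2) / (1 + r ^ 2 * (1 + t ^ 2)) -
      (-1 / (1 + r ^ 2)) =
      ((((1 + r ^ 2) ^ 2 - r ^ 4 * t ^ 2 : ℝ) : ℂ) +
        ((2 * r ^ 2 * (1 + r ^ 2) * t : ℝ) : ℂ) * Complex.I) /
      (((1 + r ^ 2 * (1 + t ^ 2)) * (1 + r ^ 2) : ℝ) : ℂ) := by
    field_simp
    ring_nf
    simp [Complex.I_sq]
    ring
  have h2 : ‖(r ^ 2 * (1 + t * Complex.I) ^ 2) / (1 + r ^ 2 * (1 + t ^ 2)) -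
      (-1 / (1 + r ^ 2))‖ =
      ((1 + r ^ 2) ^ 2 + r ^ 4 * t ^ 2) / ((1 + r ^ 2 * (1 + t ^ 2)) * (1 + r ^ 2)) := by
    rw [key, norm_div, Complex.norm_real, Real.norm_eq_abs, abs_of_pos (by positivity),
      Complex.norm_add_mul_I]
    congr 1
    rw [show ((1 + r ^ 2) ^ 2 - r ^ 4 * t ^ 2) ^ 2 + (2 * r ^ 2 * (1 + r ^ 2) * t) ^ 2 =
      (((1 + r ^ 2) ^ 2 + r ^ 4 * t ^ 2)) ^ 2 by ring]
    exact Real.sqrt_sq (by positivity)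
  rw [h1, h2]
  field_simp
  ring
end

section
/- For every r > 0 and every t ∈ ℝ, the triangle with vertices 0, q = −1/(1+r²), and γ₂(t) = r²(1+it)²/(1+r²(1+t²)) has perimeter exactly 2; that is, |γ₂(t)| + |γ₂(t) − q| + |q| = 2. -/
open Complex

lemma abs_eq_of_normSq (z : ℂ) (c : ℝ) (hc : 0 ≤ c) (h : Complex.normSq z = c ^ 2) :
    ‖z‖ = c := by
  rw [Complex.norm_def, h, Real.sqrt_sq hc]

/-- The triangle with vertices `0`, `q = −1/(1+r²)` and `γ₂(t) = r²(1+it)²/(1+r²(1+t²))`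
has perimeter exactly `2`. -/
theorem unit_perimeter_triangle (r : ℝ) (hr : 0 < r) (t : ℝ) :
    ‖((r ^ 2 * (1 + t * Complex.I) ^ 2) / (1 + r ^ 2 * (1 + t ^ 2)) : ℂ)‖ +
      ‖((r ^ 2 * (1 + t * Complex.I) ^ 2) / (1 + r ^ 2 * (1 + t ^ 2)) -
        (-1 / (1 + r ^ 2)) : ℂ)‖ +
      ‖((-1 : ℂ) / (1 + r ^ 2))‖ = 2 := by
  have hD : (0:ℝ) < 1 + r ^ 2 * (1 + t ^ 2) := by positivity
  have hE : (0:ℝ) < 1 + r ^ 2 := by positivity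
  have hDc : (1 + (r:ℂ) ^ 2 * (1 + (t:ℂ) ^ 2)) ≠ 0 := by
    rw [show (1 + (r:ℂ) ^ 2 * (1 + (t:ℂ) ^ 2)) = ((1 + r ^ 2 * (1 + t ^ 2) : ℝ) : ℂ) by
      push_cast; ring]
    exact_mod_cast hD.ne'
  have hEc : (1 + (r:ℂ) ^ 2) ≠ 0 := by
    rw [show (1 + (r:ℂ) ^ 2) = ((1 + r ^ 2 : ℝ) : ℂ) by push_cast; ring]
    exact_mod_cast hE.ne'
  -- rewrite each term as N / real
  have e1 : (↑r ^ 2 * (1 + ↑t * Complex.I) ^ 2) / (1 + ↑r ^ 2 * (1 + ↑t ^ 2))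
      = (((r ^ 2 * (1 - t ^ 2) : ℝ) : ℂ) + ((2 * r ^ 2 * t : ℝ) : ℂ) * Complex.I)
        / (((1 + r ^ 2 * (1 + t ^ 2) : ℝ) : ℂ)) := by
    push_cast
    field_simp
    ring_nf
    rw [Complex.I_sq]
    ring
  have e2 : (↑r ^ 2 * (1 + ↑t * Complex.I) ^ 2) / (1 + ↑r ^ 2 * (1 + ↑t ^ 2)) -
        (-1 / (1 + ↑r ^ 2))
      = ((((1 + r ^ 2) ^ 2 - r ^ 4 * t ^ 2 : ℝ) : ℂ)
          + ((2 * r ^ 2 * t * (1 + r ^ 2) : ℝ) : ℂ) * Complex.I)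
        / (((1 + r ^ 2 * (1 + t ^ 2)) * (1 + r ^ 2) : ℝ) : ℂ) := by
    push_cast
    field_simp
    ring_nf
    rw [Complex.I_sq]
    ring
  have habs : ∀ a b : ℝ, ‖(((a : ℝ) : ℂ) + ((b : ℝ) : ℂ) * Complex.I)‖
      = Real.sqrt (a ^ 2 + b ^ 2) := by
    intro a b
    rw [Complex.norm_def, Complex.normSq_add_mul_I]
  have h1 : ‖((↑r ^ 2 * (1 + ↑t * Complex.I) ^ 2) / (1 + ↑r ^ 2 * (1 + ↑t ^ 2)))‖
      = r ^ 2 * (1 + t ^ 2) / (1 + r ^ 2 * (1 + t ^ 2)) := by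
    rw [e1, norm_div, habs, Complex.norm_real, Real.norm_eq_abs, abs_of_pos hD]
    rw [show (r ^ 2 * (1 - t ^ 2)) ^ 2 + (2 * r ^ 2 * t) ^ 2 = (r ^ 2 * (1 + t ^ 2)) ^ 2 by ring,
      Real.sqrt_sq (by positivity)]
  have h2 : ‖((↑r ^ 2 * (1 + ↑t * Complex.I) ^ 2) / (1 + ↑r ^ 2 * (1 + ↑t ^ 2)) -
        (-1 / (1 + ↑r ^ 2)))‖
      = ((1 + r ^ 2) ^ 2 + r ^ 4 * t ^ 2) / ((1 + r ^ 2 * (1 + t ^ 2)) * (1 + r ^ 2)) := by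
    rw [e2, norm_div, habs, Complex.norm_real, Real.norm_eq_abs, abs_of_pos (by positivity)]
    rw [show ((1 + r ^ 2) ^ 2 - r ^ 4 * t ^ 2) ^ 2 + (2 * r ^ 2 * t * (1 + r ^ 2)) ^ 2
        = ((1 + r ^ 2) ^ 2 + r ^ 4 * t ^ 2) ^ 2 by ring,
      Real.sqrt_sq (by positivity)]
  have h3 : ‖((-1 : ℂ) / (1 + ↑r ^ 2))‖ = 1 / (1 + r ^ 2) := by
    rw [show (1 + (r:ℂ) ^ 2) = (((1 + r ^ 2 : ℝ)) : ℂ) by push_cast; ring]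
    rw [norm_div, Complex.norm_real, Real.norm_eq_abs, abs_of_pos hE, norm_neg, norm_one]
  rw [h1, h2, h3]
  field_simp
  ring
end

section
/- If √d₁, √d₂, √d₃ with d₁, d₂, d₃ distinct squarefree positive integers, and positive integers a₁, a₂, a₃, b₁, b₂, b₃ and squarefree positive integers e₁, e₂, e₃ satisfy a₁√d₁ + a₂√d₂ + a₃√d₃ = b₁√e₁ + b₂√e₂ + b₃√e₃, then the multisets {a₁√d₁, a₂√d₂, a₃√d₃} and {b₁√e₁, b₂√e₂, b₃√e₃} of real numbers are equal. -/
open Polynomial IntermediateField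

set_option synthInstance.maxHeartbeats 1000000
set_option maxHeartbeats 1000000

lemma quad_rep (K : IntermediateField ℚ ℝ) (c x y : ℝ) (hc : c ∈ K) (hx : x ^ 2 = c)
    (hy : y ∈ IntermediateField.adjoin K ({x} : Set ℝ)) :
    ∃ a b : ℝ, a ∈ K ∧ b ∈ K ∧ y = a + b * x := by
  have hint : IsIntegral K x := by
    refine ⟨X ^ 2 - C ⟨c, hc⟩, monic_X_pow_sub_C _ (by norm_num), ?_⟩
    simp only [eval₂_sub, eval₂_pow, eval₂_X, eval₂_C, hx]
    show c - algebraMap K ℝ ⟨c, hc⟩ = 0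
    simp
  have hmem : y ∈ Algebra.adjoin K ({x} : Set ℝ) := by
    have h1 := IntermediateField.adjoin_simple_toSubalgebra_of_isAlgebraic hint.isAlgebraic
    rw [← h1]
    exact hy
  rw [Algebra.adjoin_singleton_eq_range_aeval] at hmem
  obtain ⟨f, hf⟩ := hmem
  set q : Polynomial K := X ^ 2 - C ⟨c, hc⟩ with hq
  have hmonic : q.Monic := monic_X_pow_sub_C _ (by norm_num)
  have hdeg : (f %ₘ q).degree < q.degree := degree_modByMonic_lt f hmonic
  have hqdeg : q.degree = 2 := by
    simpa using degree_X_pow_sub_C (n := 2) (by norm_num) (⟨c, hc⟩ : K)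
  have hdeg1 : (f %ₘ q).natDegree ≤ 1 := by
    rw [hqdeg] at hdeg
    by_cases h0 : f %ₘ q = 0
    · simp [h0]
    · have := Polynomial.degree_eq_natDegree h0
      rw [this] at hdeg
      exact_mod_cast Nat.lt_succ_iff.mp (by exact_mod_cast hdeg)
  have hzero : (aeval x) q = 0 := by
    simp only [hq, map_sub, map_pow, aeval_X, aeval_C, hx]
    show c - algebraMap K ℝ ⟨c, hc⟩ = 0
    simp
  have hy2 : y = aeval x (f %ₘ q) := by
    conv_lhs => rw [← hf]
    conv_lhs => rw [← modByMonic_add_div f q]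
    simp [hzero]
  rw [eq_X_add_C_of_natDegree_le_one hdeg1] at hy2
  simp only [map_add, map_mul, aeval_C, aeval_X] at hy2
  exact ⟨algebraMap K ℝ ((f %ₘ q).coeff 0), algebraMap K ℝ ((f %ₘ q).coeff 1),
    ((f %ₘ q).coeff 0).2, ((f %ₘ q).coeff 1).2, by linarith [hy2]⟩

noncomputable def sqrtAdjoin (P : Finset ℕ) : IntermediateField ℚ ℝ :=
  IntermediateField.adjoin ℚ ((fun n : ℕ => Real.sqrt n) '' ↑P)

lemma sqrt_mem_adjoin (P : Finset ℕ) : ∀ (m : ℕ), Squarefree m →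
    (m.primeFactors : Set ℕ) ⊆ ↑P → Real.sqrt m ∈ sqrtAdjoin P := by
  intro m
  induction m using Nat.strong_induction_on with
  | _ m ih =>
    intro hm hsub
    rcases eq_or_ne m 1 with rfl | hm1
    · simpa using one_mem (sqrtAdjoin P)
    have hm0 : m ≠ 0 := hm.ne_zero
    obtain ⟨q, hq, hqd⟩ := Nat.exists_prime_and_dvd hm1
    have hqP : q ∈ P := by
      have : q ∈ m.primeFactors := Nat.mem_primeFactors.mpr ⟨hq, hqd, hm0⟩
      exact hsub this
    obtain ⟨k, rfl⟩ := hqd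
    have hk0 : k ≠ 0 := by rintro rfl; simp at hm0
    have hksf : Squarefree k := hm.squarefree_of_dvd ⟨q, by ring⟩
    have hklt : k < q * k := by
      have := hq.one_lt
      calc k = 1 * k := (one_mul k).symm
      _ < q * k := by have := hq.one_lt; have := Nat.pos_of_ne_zero hk0; exact Nat.mul_lt_mul_of_lt_of_le hq.one_lt (le_refl k) (Nat.pos_of_ne_zero hk0)
    have hksub : (k.primeFactors : Set ℕ) ⊆ ↑P := by
      intro r hr
      apply hsub
      have : k.primeFactors ⊆ (q * k).primeFactors :=
        Nat.primeFactors_mono ⟨q, by ring⟩ (by simp [hq.ne_zero, hk0])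
      exact_mod_cast this (by exact_mod_cast hr)
    have hsq : Real.sqrt (q * k : ℕ) = Real.sqrt q * Real.sqrt k := by
      push_cast
      exact Real.sqrt_mul (by positivity) _
    rw [hsq]
    exact mul_mem (IntermediateField.subset_adjoin ℚ _ ⟨q, by simpa using hqP, rfl⟩)
      (ih k hklt hksf hksub)

theorem sqrt_not_mem_adjoin : ∀ (P : Finset ℕ), (∀ p ∈ P, p.Prime) →
    ∀ m : ℕ, Squarefree m → 1 < m → (∀ p ∈ P, ¬ p ∣ m) →
    Real.sqrt m ∉ sqrtAdjoin P := by
  intro P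
  induction P using Finset.strongInduction with
  | _ P ih =>
    intro hP m hsf hm1 hcop hmem
    rcases P.eq_empty_or_nonempty with rfl | ⟨p, hp⟩
    · -- base case: rational sqrt
      rw [sqrtAdjoin] at hmem
      simp only [Finset.coe_empty, Set.image_empty, IntermediateField.adjoin_empty] at hmem
      rw [IntermediateField.mem_bot] at hmem
      obtain ⟨r, hr⟩ := hmem
      have hirr : Irrational (Real.sqrt m) := by
        rw [irrational_sqrt_natCast_iff]
        rintro ⟨r, rfl⟩
        have : IsUnit r := hsf r (dvd_refl _)
        simp [Nat.isUnit_iff.mp this] at hm1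
      exact hirr ⟨r, hr⟩
    · set P' := P.erase p with hP'
      have hPP' : P' ⊂ P := Finset.erase_ssubset hp
      have hpprime : p.Prime := hP p hp
      have hP'prime : ∀ q ∈ P', q.Prime := fun q hq => hP q (Finset.mem_of_mem_erase hq)
      -- rewrite membership
      have hsetP : (P : Set ℕ) = insert p ↑P' := by
        rw [hP']; rw [← Finset.coe_insert, Finset.insert_erase hp]
      have hset : ((fun n : ℕ => Real.sqrt n) '' ↑P)
          = ((fun n : ℕ => Real.sqrt n) '' ↑P') ∪ {Real.sqrt p} := by
        rw [hsetP, Set.image_insert_eq, Set.union_singleton]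
      have hmem2 : Real.sqrt m ∈
          IntermediateField.adjoin (sqrtAdjoin P') ({Real.sqrt p} : Set ℝ) := by
        have := IntermediateField.adjoin_adjoin_left (F := ℚ) (E := ℝ)
          ((fun n : ℕ => Real.sqrt n) '' ↑P') ({Real.sqrt p} : Set ℝ)
        rw [sqrtAdjoin, hset] at hmem
        rw [← this] at hmem
        exact hmem
      have hpK : ((p : ℕ) : ℝ) ∈ sqrtAdjoin P' := by
        exact_mod_cast IntermediateField.natCast_mem (sqrtAdjoin P') p
      have hsqp : (Real.sqrt p) ^ 2 = ((p : ℕ) : ℝ) := Real.sq_sqrt (by positivity)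
      obtain ⟨a, b, haK, hbK, hab⟩ := quad_rep (sqrtAdjoin P') _ _ _ hpK hsqp hmem2
      -- square the identity
      have hm0 : (0:ℝ) ≤ (m:ℝ) := by positivity
      have hmsq : (m : ℝ) = a^2 + b^2 * p + 2*a*b*Real.sqrt p := by
        have h1 : (Real.sqrt m)^2 = (m:ℝ) := Real.sq_sqrt hm0
        rw [hab] at h1
        have h2 : (a + b * Real.sqrt p)^2
            = a^2 + b^2 * ((Real.sqrt p)^2) + 2*a*b*Real.sqrt p := by ring
        rw [h2, hsqp] at h1
        linarith
      by_cases hb : b = 0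
      · -- sqrt m ∈ K P'
        apply ih P' hPP' hP'prime m hsf hm1
          (fun q hq => hcop q (Finset.mem_of_mem_erase hq))
        rw [hab, hb]
        simpa using haK
      by_cases ha : a = 0
      · -- sqrt (m*p) ∈ K P'
        have key : Real.sqrt ((m*p : ℕ)) = b * p := by
          push_cast
          rw [Real.sqrt_mul hm0]
          rw [hab, ha, zero_add]
          rw [mul_assoc, Real.mul_self_sqrt (by positivity)]
        have hpm : ¬ p ∣ m := hcop p hp
        have hcp : Nat.Coprime m p := (Nat.coprime_comm.mp
          ((Nat.Prime.coprime_iff_not_dvd hpprime).mpr hpm))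
        have hsfmp : Squarefree (m * p) :=
          (Nat.squarefree_mul hcp).mpr ⟨hsf, hpprime.squarefree⟩
        apply ih P' hPP' hP'prime (m*p) hsfmp
          (by have := hpprime.one_lt; exact one_lt_mul_of_lt_of_le hm1 (by omega))
        · intro q hq hqdvd
          have hqprime := hP'prime q hq
          rcases (Nat.Prime.dvd_mul hqprime).mp hqdvd with h | h
          · exact hcop q (Finset.mem_of_mem_erase hq) h
          · have : q = p := (Nat.prime_dvd_prime_iff_eq hqprime hpprime).mp h
            exact (Finset.ne_of_mem_erase hq) this
        · rw [key]
          exact mul_mem hbK hpK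
      · -- sqrt p ∈ K P'
        have hab2 : 2*a*b ≠ 0 := by positivity
        have key : Real.sqrt p = ((m:ℝ) - a^2 - b^2*p) / (2*a*b) := by
          field_simp
          linarith
        apply ih P' hPP' hP'prime p hpprime.squarefree hpprime.one_lt
        · intro q hq hqdvd
          have : q = p := (Nat.prime_dvd_prime_iff_eq (hP'prime q hq) hpprime).mp hqdvd
          exact (Finset.ne_of_mem_erase hq) this
        · rw [key]
          exact div_mem (sub_mem (sub_mem (by exact_mod_cast IntermediateField.natCast_mem (sqrtAdjoin P') m) (pow_mem haK 2)) (mul_mem (pow_mem hbK 2) hpK))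
            (mul_mem (mul_mem (by exact_mod_cast IntermediateField.natCast_mem (sqrtAdjoin P') 2) haK) hbK)

theorem sqrt_linear_indep : ∀ (P : Finset ℕ), (∀ p ∈ P, p.Prime) →
    ∀ (S : Finset ℕ) (c : ℕ → ℚ),
    (∀ n ∈ S, Squarefree n ∧ (n.primeFactors : Set ℕ) ⊆ ↑P) →
    ∑ n ∈ S, (c n : ℝ) * Real.sqrt n = 0 → ∀ n ∈ S, c n = 0 := by
  intro P
  induction P using Finset.strongInduction with
  | _ P ih =>
    intro hP S c hS hsum
    rcases P.eq_empty_or_nonempty with rfl | ⟨p, hp⟩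
    · -- all n ∈ S equal 1
      have h1 : ∀ n ∈ S, n = 1 := by
        intro n hn
        obtain ⟨hsf, hsub⟩ := hS n hn
        have : n.primeFactors = ∅ := by
          rw [← Finset.coe_eq_empty]
          simpa using hsub
        rcases Nat.primeFactors_eq_empty.mp this with rfl | rfl
        · exact absurd hsf not_squarefree_zero
        · rfl
      have hsub : S ⊆ {1} := fun n hn => Finset.mem_singleton.mpr (h1 n hn)
      rcases Finset.subset_singleton_iff.mp hsub with rfl | rfl
      · simp
      · intro n hn
        simp only [Finset.mem_singleton] at hn
        subst hn
        simpa using hsum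
    · set P' := P.erase p with hP'
      have hPP' : P' ⊂ P := Finset.erase_ssubset hp
      have hpprime : p.Prime := hP p hp
      have hP'prime : ∀ q ∈ P', q.Prime := fun q hq => hP q (Finset.mem_of_mem_erase hq)
      set S₁ := S.filter (fun n => p ∣ n) with hS₁
      set S₂ := S.filter (fun n => ¬ p ∣ n) with hS₂
      set A : ℝ := ∑ n ∈ S₂, (c n : ℝ) * Real.sqrt n with hA
      set B : ℝ := ∑ n ∈ S₁, (c n : ℝ) * Real.sqrt (↑(n / p)) with hB
      -- basic facts about elements of S₁
      have hS₁fact : ∀ n ∈ S₁, p ∣ n ∧ Squarefree (n / p) ∧ ¬ p ∣ (n / p) ∧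
          ((n / p).primeFactors : Set ℕ) ⊆ ↑P' ∧ (n / p) * p = n := by
        intro n hn
        have hnS : n ∈ S := Finset.mem_of_mem_filter n hn
        have hpd : p ∣ n := by
          have := Finset.mem_filter.mp hn
          exact this.2
        obtain ⟨hsf, hsub⟩ := hS n hnS
        have hcanc : (n / p) * p = n := Nat.div_mul_cancel hpd
        have hdvd : n / p ∣ n := ⟨p, hcanc.symm ▸ rfl⟩
        have hsf' : Squarefree (n / p) := hsf.squarefree_of_dvd hdvd
        have hnp : ¬ p ∣ (n / p) := by
          intro hcon
          obtain ⟨k, hk⟩ := hcon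
          have : p * p ∣ n := ⟨k, by rw [← hcanc, hk]; ring⟩
          exact hpprime.not_isUnit (hsf p this)
        refine ⟨hpd, hsf', hnp, ?_, hcanc⟩
        intro q hq
        have hqm : q ∈ (n/p).primeFactors := hq
        have hqn : q ∈ n.primeFactors := Nat.primeFactors_mono hdvd hsf.ne_zero hqm
        have hqP : q ∈ P := hsub (Finset.mem_coe.mpr hqn)
        have hqne : q ≠ p := by
          rintro rfl
          exact hnp (Nat.dvd_of_mem_primeFactors hqm)
        exact Finset.mem_coe.mpr (Finset.mem_erase.mpr ⟨hqne, hqP⟩)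
      have hS₂fact : ∀ n ∈ S₂, Squarefree n ∧ (n.primeFactors : Set ℕ) ⊆ ↑P' := by
        intro n hn
        have hnS : n ∈ S := Finset.mem_of_mem_filter n hn
        have hnp : ¬ p ∣ n := (Finset.mem_filter.mp hn).2
        obtain ⟨hsf, hsub⟩ := hS n hnS
        refine ⟨hsf, ?_⟩
        intro q hq
        have hqm : q ∈ n.primeFactors := hq
        have hqne : q ≠ p := by
          rintro rfl
          exact hnp (Nat.dvd_of_mem_primeFactors hqm)
        exact Finset.mem_coe.mpr (Finset.mem_erase.mpr ⟨hqne, hsub hq⟩)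
      have hAB : A + B * Real.sqrt p = 0 := by
        rw [hA, hB, Finset.sum_mul]
        have : ∀ n ∈ S₁, ((c n : ℝ) * Real.sqrt (↑(n / p))) * Real.sqrt p
            = (c n : ℝ) * Real.sqrt n := by
          intro n hn
          obtain ⟨hpd, _, _, _, hcanc⟩ := hS₁fact n hn
          rw [mul_assoc, ← Real.sqrt_mul (by positivity)]
          congr 2
          rw [← Nat.cast_mul, hcanc]
        rw [Finset.sum_congr rfl this]
        rw [add_comm, Finset.sum_filter_add_sum_filter_not S (fun n => p ∣ n)
          (fun n => (c n : ℝ) * Real.sqrt n)]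
        exact hsum
      by_cases hBz : B = 0
      · -- split into two smaller relations
        have hAz : A = 0 := by rw [hBz] at hAB; simpa using hAB
        have hc₂ : ∀ n ∈ S₂, c n = 0 :=
          ih P' hPP' hP'prime S₂ c hS₂fact hAz
        -- reindex S₁
        have hc₁ : ∀ n ∈ S₁, c n = 0 := by
          set T := S₁.image (· / p) with hT
          set c' : ℕ → ℚ := fun m => c (m * p) with hc'
          have hinj : ∀ n ∈ S₁, ∀ n' ∈ S₁, n / p = n' / p → n = n' := by
            intro n hn n' hn' h
            have h1 := (hS₁fact n hn).2.2.2.2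
            have h2 := (hS₁fact n' hn').2.2.2.2
            rw [← h1, ← h2, h]
          have hsum' : ∑ m ∈ T, (c' m : ℝ) * Real.sqrt m = 0 := by
            rw [hT, Finset.sum_image hinj]
            rw [← hBz, hB]
            apply Finset.sum_congr rfl
            intro n hn
            congr 2
            show c (n / p * p) = c n
            rw [(hS₁fact n hn).2.2.2.2]
          have hTfact : ∀ m ∈ T, Squarefree m ∧ (m.primeFactors : Set ℕ) ⊆ ↑P' := by
            intro m hm
            obtain ⟨n, hn, rfl⟩ := Finset.mem_image.mp hm
            exact ⟨(hS₁fact n hn).2.1, (hS₁fact n hn).2.2.2.1⟩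
          have := ih P' hPP' hP'prime T c' hTfact hsum'
          intro n hn
          have h6 : c (n / p * p) = 0 := this (n / p) (Finset.mem_image_of_mem _ hn)
          rwa [(hS₁fact n hn).2.2.2.2] at h6
        intro n hn
        by_cases hpd : p ∣ n
        · exact hc₁ n (Finset.mem_filter.mpr ⟨hn, hpd⟩)
        · exact hc₂ n (Finset.mem_filter.mpr ⟨hn, hpd⟩)
      · -- B ≠ 0: sqrt p would be in adjoin P'
        exfalso
        have hAK : A ∈ sqrtAdjoin P' := by
          apply sum_mem
          intro n hn
          exact mul_mem (by exact_mod_cast SubfieldClass.ratCast_mem (sqrtAdjoin P') (c n))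
            (sqrt_mem_adjoin P' n (hS₂fact n hn).1 (hS₂fact n hn).2)
        have hBK : B ∈ sqrtAdjoin P' := by
          apply sum_mem
          intro n hn
          exact mul_mem (by exact_mod_cast SubfieldClass.ratCast_mem (sqrtAdjoin P') (c n))
            (sqrt_mem_adjoin P' (n / p) (hS₁fact n hn).2.1 (hS₁fact n hn).2.2.2.1)
        have hkey : Real.sqrt p = -A / B := by
          field_simp
          linarith
        exact sqrt_not_mem_adjoin P' hP'prime p hpprime.squarefree hpprime.one_lt
          (fun q hq hqd => (Finset.ne_of_mem_erase hq)
            ((Nat.prime_dvd_prime_iff_eq (hP'prime q hq) hpprime).mp hqd))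
          (hkey ▸ div_mem (neg_mem hAK) hBK)
section
variable {α : Type*} (x y z : α)

lemma ms132 : ({x,y,z} : Multiset α) = {x,z,y} := by
  show (↑[x,y,z] : Multiset α) = ↑[x,z,y]
  rw [Multiset.coe_eq_coe]
  exact List.Perm.cons _ (List.Perm.swap _ _ _)

lemma ms213 : ({x,y,z} : Multiset α) = {y,x,z} := by
  show (↑[x,y,z] : Multiset α) = ↑[y,x,z]
  rw [Multiset.coe_eq_coe]
  exact List.Perm.swap _ _ _

lemma ms231 : ({x,y,z} : Multiset α) = {y,z,x} := by
  show (↑[x,y,z] : Multiset α) = ↑[y,z,x]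
  rw [Multiset.coe_eq_coe]
  exact (List.Perm.swap _ _ _).trans (List.Perm.cons _ (List.Perm.swap _ _ _))

lemma ms312 : ({x,y,z} : Multiset α) = {z,x,y} := by
  show (↑[x,y,z] : Multiset α) = ↑[z,x,y]
  rw [Multiset.coe_eq_coe]
  exact (List.Perm.cons _ (List.Perm.swap _ _ _)).trans (List.Perm.swap _ _ _)

lemma ms321 : ({x,y,z} : Multiset α) = {z,y,x} := by
  show (↑[x,y,z] : Multiset α) = ↑[z,y,x]
  rw [Multiset.coe_eq_coe]
  exact ((List.Perm.cons _ (List.Perm.swap _ _ _)).trans (List.Perm.swap _ _ _)).trans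
    (List.Perm.cons _ (List.Perm.swap _ _ _))
end
/-- If `a₁√d₁ + a₂√d₂ + a₃√d₃ = b₁√e₁ + b₂√e₂ + b₃√e₃` with `d₁, d₂, d₃` distinct
squarefree positive integers, `e₁, e₂, e₃` squarefree positive integers, and all
`aᵢ, bᵢ` positive integers, then the two multisets of side lengths coincide. -/
theorem sqrt_sum_eq_multiset (a₁ a₂ a₃ b₁ b₂ b₃ d₁ d₂ d₃ e₁ e₂ e₃ : ℕ)
    (ha₁ : 0 < a₁) (ha₂ : 0 < a₂) (ha₃ : 0 < a₃)
    (hb₁ : 0 < b₁) (hb₂ : 0 < b₂) (hb₃ : 0 < b₃)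
    (hd₁ : 0 < d₁) (hd₂ : 0 < d₂) (hd₃ : 0 < d₃)
    (he₁ : 0 < e₁) (he₂ : 0 < e₂) (he₃ : 0 < e₃)
    (hsd₁ : Squarefree d₁) (hsd₂ : Squarefree d₂) (hsd₃ : Squarefree d₃)
    (hse₁ : Squarefree e₁) (hse₂ : Squarefree e₂) (hse₃ : Squarefree e₃)
    (hne₁ : d₁ ≠ d₂) (hne₂ : d₁ ≠ d₃) (hne₃ : d₂ ≠ d₃)
    (heq : (a₁ : ℝ) * Real.sqrt d₁ + a₂ * Real.sqrt d₂ + a₃ * Real.sqrt d₃ =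
      (b₁ : ℝ) * Real.sqrt e₁ + b₂ * Real.sqrt e₂ + b₃ * Real.sqrt e₃) :
    ({(a₁ : ℝ) * Real.sqrt d₁, (a₂ : ℝ) * Real.sqrt d₂, (a₃ : ℝ) * Real.sqrt d₃} : Multiset ℝ) =
      ({(b₁ : ℝ) * Real.sqrt e₁, (b₂ : ℝ) * Real.sqrt e₂, (b₃ : ℝ) * Real.sqrt e₃} : Multiset ℝ) := by
  classical
  set P : Finset ℕ := ((((d₁.primeFactors ∪ d₂.primeFactors) ∪ d₃.primeFactors)
      ∪ e₁.primeFactors) ∪ e₂.primeFactors) ∪ e₃.primeFactors with hPdef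
  set S : Finset ℕ := {d₁, d₂, d₃, e₁, e₂, e₃} with hSdef
  set c : ℕ → ℚ := fun n => (if n = d₁ then (a₁:ℚ) else 0) + (if n = d₂ then (a₂:ℚ) else 0)
      + (if n = d₃ then (a₃:ℚ) else 0) - (if n = e₁ then (b₁:ℚ) else 0)
      - (if n = e₂ then (b₂:ℚ) else 0) - (if n = e₃ then (b₃:ℚ) else 0) with hcdef
  have hP : ∀ p ∈ P, p.Prime := by
    intro p hp
    simp only [hPdef, Finset.mem_union] at hp
    rcases hp with ((((hp | hp) | hp) | hp) | hp) | hp <;>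
      exact Nat.prime_of_mem_primeFactors hp
  have t1 : d₁.primeFactors ⊆ P := by
    rw [hPdef]
    exact (((Finset.subset_union_left.trans Finset.subset_union_left).trans
      Finset.subset_union_left).trans Finset.subset_union_left).trans Finset.subset_union_left
  have t2 : d₂.primeFactors ⊆ P := by
    rw [hPdef]
    exact (((Finset.subset_union_right.trans Finset.subset_union_left).trans
      Finset.subset_union_left).trans Finset.subset_union_left).trans Finset.subset_union_left
  have t3 : d₃.primeFactors ⊆ P := by
    rw [hPdef]
    exact ((Finset.subset_union_right.trans Finset.subset_union_left).trans
      Finset.subset_union_left).trans Finset.subset_union_left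
  have t4 : e₁.primeFactors ⊆ P := by
    rw [hPdef]
    exact (Finset.subset_union_right.trans Finset.subset_union_left).trans
      Finset.subset_union_left
  have t5 : e₂.primeFactors ⊆ P := by
    rw [hPdef]
    exact Finset.subset_union_right.trans Finset.subset_union_left
  have t6 : e₃.primeFactors ⊆ P := by
    rw [hPdef]
    exact Finset.subset_union_right
  have hS : ∀ n ∈ S, Squarefree n ∧ (n.primeFactors : Set ℕ) ⊆ ↑P := by
    intro n hn
    simp only [hSdef, Finset.mem_insert, Finset.mem_singleton] at hn
    rcases hn with rfl | rfl | rfl | rfl | rfl | rfl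
    · exact ⟨hsd₁, Finset.coe_subset.mpr t1⟩
    · exact ⟨hsd₂, Finset.coe_subset.mpr t2⟩
    · exact ⟨hsd₃, Finset.coe_subset.mpr t3⟩
    · exact ⟨hse₁, Finset.coe_subset.mpr t4⟩
    · exact ⟨hse₂, Finset.coe_subset.mpr t5⟩
    · exact ⟨hse₃, Finset.coe_subset.mpr t6⟩
  have hsum : ∑ n ∈ S, (c n : ℝ) * Real.sqrt n = 0 := by
    have hc : ∀ n : ℕ, ((c n : ℚ) : ℝ) = (if n = d₁ then (a₁:ℝ) else 0)
        + (if n = d₂ then (a₂:ℝ) else 0) + (if n = d₃ then (a₃:ℝ) else 0)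
        - (if n = e₁ then (b₁:ℝ) else 0) - (if n = e₂ then (b₂:ℝ) else 0)
        - (if n = e₃ then (b₃:ℝ) else 0) := by
      intro n
      simp only [hcdef]
      split_ifs <;> push_cast <;> ring
    rw [Finset.sum_congr rfl (fun n _ => by rw [hc n])]
    simp only [add_mul, sub_mul, ite_mul, zero_mul]
    rw [Finset.sum_sub_distrib, Finset.sum_sub_distrib, Finset.sum_sub_distrib,
      Finset.sum_add_distrib, Finset.sum_add_distrib]
    rw [Finset.sum_ite_eq' S d₁ (fun n => (a₁:ℝ) * Real.sqrt n),
      Finset.sum_ite_eq' S d₂ (fun n => (a₂:ℝ) * Real.sqrt n),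
      Finset.sum_ite_eq' S d₃ (fun n => (a₃:ℝ) * Real.sqrt n),
      Finset.sum_ite_eq' S e₁ (fun n => (b₁:ℝ) * Real.sqrt n),
      Finset.sum_ite_eq' S e₂ (fun n => (b₂:ℝ) * Real.sqrt n),
      Finset.sum_ite_eq' S e₃ (fun n => (b₃:ℝ) * Real.sqrt n)]
    have m1 : d₁ ∈ S := by simp [hSdef]
    have m2 : d₂ ∈ S := by simp [hSdef]
    have m3 : d₃ ∈ S := by simp [hSdef]
    have m4 : e₁ ∈ S := by simp [hSdef]
    have m5 : e₂ ∈ S := by simp [hSdef]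
    have m6 : e₃ ∈ S := by simp [hSdef]
    rw [if_pos m1, if_pos m2, if_pos m3, if_pos m4, if_pos m5, if_pos m6]
    linarith [heq]
  have hzero := sqrt_linear_indep P hP S c hS hsum
  have cd1 : c d₁ = 0 := hzero d₁ (by simp [hSdef])
  have cd2 : c d₂ = 0 := hzero d₂ (by simp [hSdef])
  have cd3 : c d₃ = 0 := hzero d₃ (by simp [hSdef])
  simp only [hcdef, eq_self_iff_true, if_true, if_neg hne₁, if_neg hne₂, if_neg hne₃,
    if_neg (Ne.symm hne₁), if_neg (Ne.symm hne₂), if_neg (Ne.symm hne₃),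
    add_zero, zero_add] at cd1 cd2 cd3
  have hd₁e : d₁ = e₁ ∨ d₁ = e₂ ∨ d₁ = e₃ := by
    by_contra h
    push_neg at h
    rw [if_neg h.1, if_neg h.2.1, if_neg h.2.2] at cd1
    have : (a₁ : ℚ) = 0 := by linarith [cd1]
    exact ha₁.ne' (by exact_mod_cast this)
  have hd₂e : d₂ = e₁ ∨ d₂ = e₂ ∨ d₂ = e₃ := by
    by_contra h
    push_neg at h
    rw [if_neg h.1, if_neg h.2.1, if_neg h.2.2] at cd2
    have : (a₂ : ℚ) = 0 := by linarith [cd2]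
    exact ha₂.ne' (by exact_mod_cast this)
  have hd₃e : d₃ = e₁ ∨ d₃ = e₂ ∨ d₃ = e₃ := by
    by_contra h
    push_neg at h
    rw [if_neg h.1, if_neg h.2.1, if_neg h.2.2] at cd3
    have : (a₃ : ℚ) = 0 := by linarith [cd3]
    exact ha₃.ne' (by exact_mod_cast this)
  rcases hd₁e with h1 | h1 | h1 <;> rcases hd₂e with h2 | h2 | h2 <;>
    rcases hd₃e with h3 | h3 | h3 <;> try omega
  -- 6 good cases
  · -- d₁=e₁, d₂=e₂, d₃=e₃ : identity
    subst h1; subst h2; subst h3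
    simp only [eq_self_iff_true, if_true, if_neg hne₁, if_neg hne₂, if_neg hne₃, if_neg (Ne.symm hne₁),
      if_neg (Ne.symm hne₂), if_neg (Ne.symm hne₃)] at cd1 cd2 cd3
    have k1 : a₁ = b₁ := by exact_mod_cast show (a₁:ℚ) = b₁ by linarith [cd1]
    have k2 : a₂ = b₂ := by exact_mod_cast show (a₂:ℚ) = b₂ by linarith [cd2]
    have k3 : a₃ = b₃ := by exact_mod_cast show (a₃:ℚ) = b₃ by linarith [cd3]
    rw [k1, k2, k3]
  · -- d₁=e₁, d₂=e₃, d₃=e₂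
    subst h1; subst h2; subst h3
    simp only [eq_self_iff_true, if_true, if_neg hne₁, if_neg hne₂, if_neg hne₃, if_neg (Ne.symm hne₁),
      if_neg (Ne.symm hne₂), if_neg (Ne.symm hne₃)] at cd1 cd2 cd3
    have k1 : a₁ = b₁ := by exact_mod_cast show (a₁:ℚ) = b₁ by linarith [cd1]
    have k2 : a₂ = b₃ := by exact_mod_cast show (a₂:ℚ) = b₃ by linarith [cd2]
    have k3 : a₃ = b₂ := by exact_mod_cast show (a₃:ℚ) = b₂ by linarith [cd3]
    rw [k1, k2, k3]
    exact ms132 _ _ _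
  · -- d₁=e₂, d₂=e₁, d₃=e₃
    subst h1; subst h2; subst h3
    simp only [eq_self_iff_true, if_true, if_neg hne₁, if_neg hne₂, if_neg hne₃, if_neg (Ne.symm hne₁),
      if_neg (Ne.symm hne₂), if_neg (Ne.symm hne₃)] at cd1 cd2 cd3
    have k1 : a₁ = b₂ := by exact_mod_cast show (a₁:ℚ) = b₂ by linarith [cd1]
    have k2 : a₂ = b₁ := by exact_mod_cast show (a₂:ℚ) = b₁ by linarith [cd2]
    have k3 : a₃ = b₃ := by exact_mod_cast show (a₃:ℚ) = b₃ by linarith [cd3]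
    rw [k1, k2, k3]
    exact ms213 _ _ _
  · -- d₁=e₂, d₂=e₃, d₃=e₁
    subst h1; subst h2; subst h3
    simp only [eq_self_iff_true, if_true, if_neg hne₁, if_neg hne₂, if_neg hne₃, if_neg (Ne.symm hne₁),
      if_neg (Ne.symm hne₂), if_neg (Ne.symm hne₃)] at cd1 cd2 cd3
    have k1 : a₁ = b₂ := by exact_mod_cast show (a₁:ℚ) = b₂ by linarith [cd1]
    have k2 : a₂ = b₃ := by exact_mod_cast show (a₂:ℚ) = b₃ by linarith [cd2]
    have k3 : a₃ = b₁ := by exact_mod_cast show (a₃:ℚ) = b₁ by linarith [cd3]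
    rw [k1, k2, k3]
    exact ms312 _ _ _
  · -- d₁=e₃, d₂=e₁, d₃=e₂
    subst h1; subst h2; subst h3
    simp only [eq_self_iff_true, if_true, if_neg hne₁, if_neg hne₂, if_neg hne₃, if_neg (Ne.symm hne₁),
      if_neg (Ne.symm hne₂), if_neg (Ne.symm hne₃)] at cd1 cd2 cd3
    have k1 : a₁ = b₃ := by exact_mod_cast show (a₁:ℚ) = b₃ by linarith [cd1]
    have k2 : a₂ = b₁ := by exact_mod_cast show (a₂:ℚ) = b₁ by linarith [cd2]
    have k3 : a₃ = b₂ := by exact_mod_cast show (a₃:ℚ) = b₂ by linarith [cd3]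
    rw [k1, k2, k3]
    exact ms231 _ _ _
  · -- d₁=e₃, d₂=e₂, d₃=e₁
    subst h1; subst h2; subst h3
    simp only [eq_self_iff_true, if_true, if_neg hne₁, if_neg hne₂, if_neg hne₃, if_neg (Ne.symm hne₁),
      if_neg (Ne.symm hne₂), if_neg (Ne.symm hne₃)] at cd1 cd2 cd3
    have k1 : a₁ = b₃ := by exact_mod_cast show (a₁:ℚ) = b₃ by linarith [cd1]
    have k2 : a₂ = b₂ := by exact_mod_cast show (a₂:ℚ) = b₂ by linarith [cd2]
    have k3 : a₃ = b₁ := by exact_mod_cast show (a₃:ℚ) = b₁ by linarith [cd3]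
    rw [k1, k2, k3]
    exact ms321 _ _ _
end

section
/- Let k ∈ ℕ, k ≥ 1, and p = 2(2k−1)². Then the number H(p) of non-congruent Heronian triangles with perimeter p satisfies H(p) = Ω(k); i.e., there is an absolute constant c > 0 such that H(2(2k−1)²) ≥ c·k for all sufficiently large k. -/
/-- The number of non-congruent Heronian triangles (non-degenerate triangles with
integer side lengths and integer area) with perimeter `n`, counted as ordered triples
`a ≤ b ≤ c`; by Heron's formula the area is an integer `A` iff
`(a+b+c)(−a+b+c)(a−b+c)(a+b−c) = 16A²`. -/
noncomputable def heronianCount (n : ℕ) : ℕ :=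
  {t : ℕ × ℕ × ℕ | t.1 ≤ t.2.1 ∧ t.2.1 ≤ t.2.2 ∧ t.1 + t.2.1 + t.2.2 = n ∧
    0 < t.1 ∧ t.2.2 < t.1 + t.2.1 ∧
    ∃ A : ℕ, ((t.1 : ℤ) + t.2.1 + t.2.2) * (-(t.1 : ℤ) + t.2.1 + t.2.2) *
      ((t.1 : ℤ) - t.2.1 + t.2.2) * ((t.1 : ℤ) + t.2.1 - t.2.2) = 16 * (A : ℤ) ^ 2}.ncard

lemma heronian_key (m N : ℕ) (hm : 16 ≤ m) (hN : 16 * N ≤ m) :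
    N ≤ heronianCount (2 * m ^ 2) := by
  classical
  rw [heronianCount]
  set S := {t : ℕ × ℕ × ℕ | t.1 ≤ t.2.1 ∧ t.2.1 ≤ t.2.2 ∧ t.1 + t.2.1 + t.2.2 = 2 * m ^ 2 ∧
    0 < t.1 ∧ t.2.2 < t.1 + t.2.1 ∧
    ∃ A : ℕ, ((t.1 : ℤ) + t.2.1 + t.2.2) * (-(t.1 : ℤ) + t.2.1 + t.2.2) *
      ((t.1 : ℤ) - t.2.1 + t.2.2) * ((t.1 : ℤ) + t.2.1 - t.2.2) = 16 * (A : ℤ) ^ 2} with hSdef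
  have hfin : S.Finite := by
    apply Set.Finite.subset (((Set.finite_Iic (2 * m ^ 2)).prod
      ((Set.finite_Iic (2 * m ^ 2)).prod (Set.finite_Iic (2 * m ^ 2)))))
    rintro ⟨a, b, c⟩ ⟨-, -, hsum, -⟩
    simp only [Set.mem_prod, Set.mem_Iic]
    dsimp only at hsum ⊢
    omega
  set f : ℕ → ℕ × ℕ × ℕ := fun i =>
    (4 * ((i + 1) * (m - (i + 1))), m ^ 2 - 2 * ((i + 1) * (m - (i + 1))),
      m ^ 2 - 2 * ((i + 1) * (m - (i + 1)))) with hf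
  have hw6 : ∀ i < N, 6 * ((i + 1) * (m - (i + 1))) ≤ m ^ 2 := by
    intro i hi
    have hw : (i + 1) * (m - (i + 1)) ≤ N * m := Nat.mul_le_mul (by omega) (by omega)
    calc 6 * ((i + 1) * (m - (i + 1))) ≤ 6 * (N * m) := Nat.mul_le_mul_left _ hw
      _ ≤ 16 * N * m := by rw [mul_assoc]; exact Nat.mul_le_mul_right _ (by omega)
      _ ≤ m * m := Nat.mul_le_mul_right _ hN
      _ = m ^ 2 := (sq m).symm
  have hmem : ∀ i < N, f i ∈ S := by
    intro i hi
    have hv : 2 * (i + 1) ≤ m := by omega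
    have h6 := hw6 i hi
    have hwpos : 0 < (i + 1) * (m - (i + 1)) := Nat.mul_pos (by omega) (by omega)
    refine ⟨by simp only [hf]; omega, le_refl _, by simp only [hf]; omega,
      by simp only [hf]; omega, by simp only [hf]; omega, ?_⟩
    refine ⟨2 * m * (m - 2 * (i + 1)) * ((i + 1) * (m - (i + 1))), ?_⟩
    simp only [hf]
    have c1 : ((m - (i + 1) : ℕ) : ℤ) = (m : ℤ) - (i + 1) := by
      push_cast [Nat.cast_sub (by omega : i + 1 ≤ m)]; ring
    have c2 : ((m ^ 2 - 2 * ((i + 1) * (m - (i + 1))) : ℕ) : ℤ)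
        = (m : ℤ) ^ 2 - 2 * ((i + 1) * ((m : ℤ) - (i + 1))) := by
      push_cast [Nat.cast_sub (by omega : 2 * ((i + 1) * (m - (i + 1))) ≤ m ^ 2), c1]; ring
    have c3 : ((m - 2 * (i + 1) : ℕ) : ℤ) = (m : ℤ) - 2 * (i + 1) := by
      push_cast [Nat.cast_sub hv]; ring
    push_cast [c1, c2, c3]
    ring
  have hinj : Set.InjOn f ↑(Finset.range N) := by
    intro i hi j hj h
    simp only [Finset.coe_range, Set.mem_Iio] at hi hj
    have h1 : 4 * ((i + 1) * (m - (i + 1))) = 4 * ((j + 1) * (m - (j + 1))) :=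
      congrArg Prod.fst h
    have h1' : ((i : ℤ) + 1) * ((m : ℤ) - (i + 1)) = ((j : ℤ) + 1) * ((m : ℤ) - (j + 1)) := by
      have := congrArg (Nat.cast : ℕ → ℤ) h1
      push_cast [Nat.cast_sub (by omega : i + 1 ≤ m), Nat.cast_sub (by omega : j + 1 ≤ m)] at this
      linarith
    have e : ((i : ℤ) - j) * ((m : ℤ) - (i + 1) - (j + 1)) = 0 := by linear_combination h1'
    rcases mul_eq_zero.mp e with h' | h'
    · have : (i : ℤ) = j := by linarith
      exact_mod_cast this
    · exfalso
      have : (m : ℤ) = (i : ℤ) + 1 + (j + 1) := by linarith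
      have : m = i + 1 + (j + 1) := by exact_mod_cast this
      omega
  calc N = (Finset.range N).card := (Finset.card_range N).symm
    _ = ((Finset.range N).image f).card := (Finset.card_image_of_injOn hinj).symm
    _ = (((Finset.range N).image f : Finset (ℕ × ℕ × ℕ)) : Set (ℕ × ℕ × ℕ)).ncard := (Set.ncard_coe_finset ((Finset.range N).image f)).symm
    _ ≤ S.ncard := by
        have hsub : (((Finset.range N).image f : Finset _) : Set (ℕ × ℕ × ℕ)) ⊆ S := by
          intro t ht
          obtain ⟨i, hi, rfl⟩ := Finset.mem_image.mp (Finset.mem_coe.mp ht)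
          exact hmem i (Finset.mem_range.mp hi)
        exact Set.ncard_le_ncard hsub hfin

/-- There is an absolute constant `c > 0` such that for all sufficiently large `k`,
the number of non-congruent Heronian triangles with perimeter `2(2k−1)²` is at
least `c·k`; that is, `H(2(2k−1)²) = Ω(k)`. -/
theorem heronian_count_lower :
    ∃ c : ℝ, 0 < c ∧ ∃ K : ℕ, ∀ k : ℕ, K ≤ k →
      c * k ≤ (heronianCount (2 * (2 * k - 1) ^ 2) : ℝ) := by
  refine ⟨1 / 32, by norm_num, 16, fun k hk => ?_⟩
  have hkey := heronian_key (2 * k - 1) ((2 * k - 1) / 16) (by omega) (by omega)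
  have hk32 : k ≤ 32 * ((2 * k - 1) / 16) := by omega
  have : (k : ℝ) ≤ 32 * (heronianCount (2 * (2 * k - 1) ^ 2) : ℝ) := by
    have : k ≤ 32 * heronianCount (2 * (2 * k - 1) ^ 2) := by omega
    exact_mod_cast this
  linarith
end

section
/- Every Heronian triangle can be realized with all three vertices in ℤ²; i.e., if a triangle has integer side lengths and integer area, then there exist points A, B, C ∈ ℤ² such that the triangle ABC has those side lengths. -/
/-- Descent step for a split prime `p = s² + t²`. -/
lemma descent (p : ℕ) (hp : p.Prime) (s t m n : ℤ) (hst : s ^ 2 + t ^ 2 = p)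
    (hd : (p : ℤ) ∣ m ^ 2 + n ^ 2) :
    ∃ u v m' n' : ℤ, u ^ 2 + v ^ 2 = p ∧ m = u * m' - v * n' ∧ n = v * m' + u * n' := by
  have hpZ : Prime (p : ℤ) := Nat.prime_iff_prime_int.mp hp
  have hps : ¬ (p : ℤ) ∣ s := by
    intro h
    have h1 : (p:ℤ) ∣ t ^ 2 := by
      have h2 : (p:ℤ) ∣ s ^ 2 := dvd_pow h (by norm_num)
      have : (p:ℤ) ∣ s ^ 2 + t ^ 2 := hst ▸ dvd_refl _
      exact (dvd_add_right h2).mp this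
    have h3 : (p:ℤ) ∣ t := hpZ.dvd_of_dvd_pow h1
    have h4 : (p:ℤ) * p ∣ s ^ 2 + t ^ 2 := by
      rcases h with ⟨x, rfl⟩; rcases h3 with ⟨y, rfl⟩
      exact ⟨x ^ 2 + y ^ 2, by ring⟩
    rw [hst] at h4
    have hp0 : (0:ℤ) < p := by exact_mod_cast hp.pos
    have h5 := Int.le_of_dvd hp0 h4
    nlinarith [hp.two_le, h5]
  have hkey : (p:ℤ) ∣ (s * n - t * m) * (s * n + t * m) := by
    rcases hd with ⟨k, hk⟩
    refine ⟨s ^ 2 * k - m ^ 2, ?_⟩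
    linear_combination s ^ 2 * hk - m ^ 2 * hst
  rcases hpZ.dvd_mul.mp hkey with h | h
  · -- p ∣ s*n - t*m ; use u = s, v = t
    have hms : (p:ℤ) ∣ s * (s * m + t * n) := by
      rcases h with ⟨k, hk⟩
      refine ⟨m + t * k, ?_⟩
      linear_combination t * hk + m * hst
    have hm' : (p:ℤ) ∣ s * m + t * n := (hpZ.dvd_mul.mp hms).resolve_left hps
    rcases hm' with ⟨m', hm'⟩
    rcases h with ⟨n', hn'⟩
    refine ⟨s, t, m', n', hst, ?_, ?_⟩
    · -- m = s * m' - t * n'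
      have hp0 : (p:ℤ) ≠ 0 := by exact_mod_cast hp.ne_zero
      have : (p:ℤ) * m = (p:ℤ) * (s * m' - t * n') := by
        have e1 : s * (s*m + t*n) - t * (s*n - t*m) = (s^2 + t^2) * m := by ring
        rw [hm', hn'] at e1
        rw [hst] at e1
        linarith [e1]
      exact mul_left_cancel₀ hp0 this
    · have hp0 : (p:ℤ) ≠ 0 := by exact_mod_cast hp.ne_zero
      have : (p:ℤ) * n = (p:ℤ) * (t * m' + s * n') := by
        have e1 : t * (s*m + t*n) + s * (s*n - t*m) = (s^2 + t^2) * n := by ring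
        rw [hm', hn'] at e1
        rw [hst] at e1
        linarith [e1]
      exact mul_left_cancel₀ hp0 this
  · -- p ∣ s*n + t*m ; use u = s, v = -t
    have hms : (p:ℤ) ∣ s * (s * m - t * n) := by
      rcases h with ⟨k, hk⟩
      refine ⟨m - t * k, ?_⟩
      linear_combination -t * hk + m * hst
    have hm' : (p:ℤ) ∣ s * m - t * n := (hpZ.dvd_mul.mp hms).resolve_left hps
    rcases hm' with ⟨m', hm'⟩
    rcases h with ⟨n', hn'⟩
    refine ⟨s, -t, m', n', by linarith [hst], ?_, ?_⟩
    · have hp0 : (p:ℤ) ≠ 0 := by exact_mod_cast hp.ne_zero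
      have : (p:ℤ) * m = (p:ℤ) * (s * m' - -t * n') := by
        have e1 : s * (s*m - t*n) + t * (s*n + t*m) = (s^2 + t^2) * m := by ring
        rw [hm', hn'] at e1
        rw [hst] at e1
        linarith [e1]
      exact mul_left_cancel₀ hp0 this
    · have hp0 : (p:ℤ) ≠ 0 := by exact_mod_cast hp.ne_zero
      have : (p:ℤ) * n = (p:ℤ) * (-t * m' + s * n') := by
        have e1 : s * (s*n + t*m) - t * (s*m - t*n) = (s^2 + t^2) * n := by ring
        rw [hm', hn'] at e1
        rw [hst] at e1
        linarith [e1]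
      exact mul_left_cancel₀ hp0 this

/-- For an inert prime `p ≡ 3 (mod 4)`, `p ∣ m² + n²` forces `p ∣ m` and `p ∣ n`. -/
lemma inert_dvd (p : ℕ) (hp : p.Prime) (h3 : p % 4 = 3) (m n : ℤ)
    (hd : (p : ℤ) ∣ m ^ 2 + n ^ 2) : (p : ℤ) ∣ m ∧ (p : ℤ) ∣ n := by
  haveI : Fact p.Prime := ⟨hp⟩
  have hsq : ¬ IsSquare (-1 : ZMod p) := by
    rw [ZMod.exists_sq_eq_neg_one_iff]
    simp [h3]
  have hmod : ((m : ZMod p)) ^ 2 + ((n : ZMod p)) ^ 2 = 0 := by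
    have := (ZMod.intCast_zmod_eq_zero_iff_dvd (m ^ 2 + n ^ 2) p).mpr hd
    push_cast at this
    exact this
  by_cases hn : (n : ZMod p) = 0
  · have hm : (m : ZMod p) ^ 2 = 0 := by rw [hn] at hmod; simpa using hmod
    have hm0 : (m : ZMod p) = 0 := by
      exact pow_eq_zero_iff (by norm_num) |>.mp hm
    exact ⟨(ZMod.intCast_zmod_eq_zero_iff_dvd m p).mp hm0,
      (ZMod.intCast_zmod_eq_zero_iff_dvd n p).mp hn⟩
  · exfalso
    apply hsq
    refine ⟨(m : ZMod p) / (n : ZMod p), ?_⟩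
    have h2 : (m : ZMod p) ^ 2 = - (n : ZMod p) ^ 2 := by linear_combination hmod
    field_simp
    linear_combination -h2

/-- Key factorization lemma: any `(m, n)` with `m² + n² = (bc)²` arises as
`z₁ · conj z₂` for Gaussian integers of norms `c²` and `b²`. -/
lemma key_factor (c : ℕ) : ∀ b : ℕ, 0 < b → ∀ m n : ℤ, m ^ 2 + n ^ 2 = ((b : ℤ) * c) ^ 2 →
    ∃ x1 y1 x2 y2 : ℤ, x1 ^ 2 + y1 ^ 2 = (c : ℤ) ^ 2 ∧ x2 ^ 2 + y2 ^ 2 = (b : ℤ) ^ 2 ∧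
      x1 * x2 + y1 * y2 = m ∧ y1 * x2 - x1 * y2 = n := by
  intro b
  induction b using Nat.strong_induction_on with
  | _ b ih =>
    intro hb m n hmn
    rcases eq_or_lt_of_le (show 1 ≤ b from hb) with hb1 | hb1
    · -- b = 1
      refine ⟨m, n, 1, 0, ?_, ?_, by ring, by ring⟩
      · rw [hmn, ← hb1]; push_cast; ring
      · rw [← hb1]; norm_num
    · -- b > 1
      obtain ⟨p, b', hpp, rfl⟩ : ∃ p b', p.Prime ∧ b = p * b' :=
        ⟨b.minFac, b / b.minFac, Nat.minFac_prime (by omega),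
          (Nat.mul_div_cancel' (Nat.minFac_dvd b)).symm⟩
      have hp2 : 2 ≤ p := hpp.two_le
      have hb' : 0 < b' := Nat.pos_of_ne_zero fun h => by simp [h] at hb
      have hb'lt : b' < p * b' := (lt_mul_iff_one_lt_left hb').mpr (by omega)
      have hpdvd : (p : ℤ) ∣ m ^ 2 + n ^ 2 := by
        rw [hmn]
        exact ⟨(p : ℤ) * b' ^ 2 * c ^ 2, by push_cast; ring⟩
      by_cases h3 : p % 4 = 3
      · -- inert prime
        obtain ⟨hm, hn⟩ := inert_dvd p hpp h3 m n hpdvd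
        obtain ⟨m1, rfl⟩ := hm
        obtain ⟨n1, rfl⟩ := hn
        have hmn1 : m1 ^ 2 + n1 ^ 2 = ((b' : ℤ) * c) ^ 2 := by
          have hp0 : (0:ℤ) < (p:ℤ)^2 := by positivity
          have : (p:ℤ)^2 * (m1 ^ 2 + n1 ^ 2) = (p:ℤ)^2 * ((b' : ℤ) * c) ^ 2 := by
            push_cast at hmn ⊢; nlinarith [hmn]
          exact mul_left_cancel₀ (by positivity) this
        obtain ⟨x1, y1, x2, y2, h1, h2, h4, h5⟩ := ih b' hb'lt hb' m1 n1 hmn1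
        refine ⟨x1, y1, (p:ℤ) * x2, (p:ℤ) * y2, h1, ?_, ?_, ?_⟩
        · push_cast; nlinarith [h2]
        · linear_combination (p:ℤ) * h4
        · linear_combination (p:ℤ) * h5
      · -- split prime : p = s² + t²
        have hst : ∃ s t : ℤ, s ^ 2 + t ^ 2 = (p : ℤ) := by
          rcases eq_or_ne p 2 with h2 | h2
          · exact ⟨1, 1, by rw [h2]; norm_num⟩
          · haveI : Fact p.Prime := ⟨hpp⟩
            obtain ⟨s, t, hst⟩ := Nat.Prime.sq_add_sq (p := p) h3
            exact ⟨(s:ℤ), (t:ℤ), by exact_mod_cast hst⟩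
        obtain ⟨s, t, hst⟩ := hst
        obtain ⟨u1, v1, m1, n1, huv1, hm1, hn1⟩ := descent p hpp s t m n hst hpdvd
        subst hm1; subst hn1
        have hmn1 : m1 ^ 2 + n1 ^ 2 = (p:ℤ) * ((b':ℤ) * c) ^ 2 := by
          have e : (p:ℤ) * (m1 ^ 2 + n1 ^ 2) = (p:ℤ) * ((p:ℤ) * ((b':ℤ) * c) ^ 2) := by
            push_cast at hmn
            linear_combination hmn - (m1^2 + n1^2) * huv1
          exact mul_left_cancel₀ (by exact_mod_cast hpp.ne_zero) e
        have hpdvd1 : (p:ℤ) ∣ m1 ^ 2 + n1 ^ 2 := ⟨((b':ℤ) * c) ^ 2, hmn1⟩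
        obtain ⟨u2, v2, m2, n2, huv2, hm2, hn2⟩ := descent p hpp s t m1 n1 hst hpdvd1
        subst hm2; subst hn2
        have hmn2 : m2 ^ 2 + n2 ^ 2 = ((b':ℤ) * c) ^ 2 := by
          have e : (p:ℤ) * (m2 ^ 2 + n2 ^ 2) = (p:ℤ) * ((b':ℤ) * c) ^ 2 := by
            linear_combination hmn1 - (m2^2 + n2^2) * huv2
          exact mul_left_cancel₀ (by exact_mod_cast hpp.ne_zero) e
        obtain ⟨x1, y1, x2', y2', h1, h2, h4, h5⟩ := ih b' hb'lt hb' m2 n2 hmn2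
        -- z2 = conj(π1 π2) * z2'' where π1 = u1 + v1 i, π2 = u2 + v2 i
        refine ⟨x1, y1,
          (u1*u2 - v1*v2) * x2' + (u1*v2 + v1*u2) * y2',
          (u1*u2 - v1*v2) * y2' - (u1*v2 + v1*u2) * x2', h1, ?_, ?_, ?_⟩
        · -- norm multiplicativity
          push_cast
          linear_combination ((u1*u2 - v1*v2)^2 + (u1*v2 + v1*u2)^2) * h2
            + (b':ℤ)^2 * ((u2^2 + v2^2) * huv1 + (p:ℤ) * huv2)
        · linear_combination (u1*u2 - v1*v2) * h4 - (u1*v2 + v1*u2) * h5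
        · linear_combination (u1*v2 + v1*u2) * h4 + (u1*u2 - v1*v2) * h5

/-- Yiu's theorem: every Heronian triangle (integer side lengths `a, b, c` satisfying
the strict triangle inequalities, with integer area, i.e.
`(a+b+c)(−a+b+c)(a−b+c)(a+b−c) = 16A²` for some integer `A`) can be realized with
all three vertices in `ℤ²` (squared side lengths realized as squared distances). -/
theorem heronian_is_lattice (a b c : ℕ) (ha : 0 < a) (hb : 0 < b) (hc : 0 < c)
    (hab : (c : ℤ) < a + b) (hbc : (a : ℤ) < b + c) (hca : (b : ℤ) < c + a)
    (harea : ∃ A : ℕ, ((a : ℤ) + b + c) * (-(a : ℤ) + b + c) * ((a : ℤ) - b + c) *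
      ((a : ℤ) + b - c) = 16 * (A : ℤ) ^ 2) :
    ∃ A B C : ℤ × ℤ,
      (B.1 - C.1) ^ 2 + (B.2 - C.2) ^ 2 = (a : ℤ) ^ 2 ∧
      (C.1 - A.1) ^ 2 + (C.2 - A.2) ^ 2 = (b : ℤ) ^ 2 ∧
      (A.1 - B.1) ^ 2 + (A.2 - B.2) ^ 2 = (c : ℤ) ^ 2 := by
  obtain ⟨A, hA⟩ := harea
  have h16 : ((b:ℤ)^2 + (c:ℤ)^2 - (a:ℤ)^2)^2 + 16 * (A:ℤ)^2 = 4 * (b:ℤ)^2 * (c:ℤ)^2 := by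
    linear_combination -hA
  have heven : (2:ℤ) ∣ (b:ℤ)^2 + (c:ℤ)^2 - (a:ℤ)^2 := by
    rcases Int.even_or_odd ((b:ℤ)^2 + (c:ℤ)^2 - (a:ℤ)^2) with he | ho
    · exact he.two_dvd
    · exfalso
      obtain ⟨k, hk⟩ := ho
      have h4 : (4:ℤ) ∣ 1 :=
        ⟨(b:ℤ)^2 * (c:ℤ)^2 - 4*(A:ℤ)^2 - k^2 - k, by linear_combination h16 - (2*k + 1 +
          ((b:ℤ)^2 + (c:ℤ)^2 - (a:ℤ)^2)) * hk⟩
      norm_num at h4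
  obtain ⟨m, hm⟩ := heven
  have hmn : m ^ 2 + (2 * (A:ℤ)) ^ 2 = ((b:ℤ) * c) ^ 2 := by
    have e : (4:ℤ) * (m ^ 2 + (2 * (A:ℤ)) ^ 2) = 4 * ((b:ℤ) * c) ^ 2 := by
      linear_combination h16 - (2 * m + ((b:ℤ)^2 + (c:ℤ)^2 - (a:ℤ)^2)) * hm
    exact mul_left_cancel₀ (by norm_num) e
  obtain ⟨x1, y1, x2, y2, h1, h2, h4, h5⟩ := key_factor c b hb m (2 * A) hmn
  refine ⟨(0, 0), (x1, y1), (x2, y2), ?_, ?_, ?_⟩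
  · show (x1 - x2) ^ 2 + (y1 - y2) ^ 2 = (a:ℤ) ^ 2
    linear_combination h1 + h2 - 2 * h4 + hm
  · show (x2 - 0) ^ 2 + (y2 - 0) ^ 2 = (b:ℤ) ^ 2
    linear_combination h2
  · show (0 - x1) ^ 2 + (0 - y1) ^ 2 = (c:ℤ) ^ 2
    linear_combination h1
end

section
/- For all sufficiently large n ∈ ℕ, there exists a real number p > 0 and a set of at least c·n^{5/2} (for an absolute constant c > 0) non-degenerate triangles with vertices in {1, ..., n} × {1, ..., n} all having perimeter exactly p. -/
/-- Euclidean distance between two lattice points. -/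
noncomputable def latticeDist (P Q : ℤ × ℤ) : ℝ :=
  Real.sqrt (((P.1 - Q.1) ^ 2 + (P.2 - Q.2) ^ 2 : ℤ))

lemma latticeDist_eq (P Q : ℤ × ℤ) (d : ℤ) (hd : 0 ≤ d)
    (h : (P.1 - Q.1) ^ 2 + (P.2 - Q.2) ^ 2 = d ^ 2) :
    latticeDist P Q = (d : ℝ) := by
  rw [latticeDist, h]
  push_cast
  rw [Real.sqrt_sq (by exact_mod_cast hd)]

set_option maxHeartbeats 1000000 in
/-- For all sufficiently large `n`, there exist a perimeter `p > 0` and at least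
`c·n^{5/2}` triangles (distinct as vertex sets) with vertices in `{1,…,n}²`, all
non-degenerate and of perimeter exactly `p`. -/
theorem many_equal_perimeter_triangles_in_grid :
    ∃ c : ℝ, 0 < c ∧ ∃ N : ℕ, ∀ n : ℕ, N ≤ n →
      ∃ p : ℝ, 0 < p ∧ ∃ S : Finset (Finset (ℤ × ℤ)),
        (∀ t ∈ S, ∃ A B C : ℤ × ℤ, t = {A, B, C} ∧
          (1 ≤ A.1 ∧ A.1 ≤ n ∧ 1 ≤ A.2 ∧ A.2 ≤ n) ∧
          (1 ≤ B.1 ∧ B.1 ≤ n ∧ 1 ≤ B.2 ∧ B.2 ≤ n) ∧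
          (1 ≤ C.1 ∧ C.1 ≤ n ∧ 1 ≤ C.2 ∧ C.2 ≤ n) ∧
          (B.1 - A.1) * (C.2 - A.2) - (B.2 - A.2) * (C.1 - A.1) ≠ 0 ∧
          latticeDist A B + latticeDist B C + latticeDist C A = p) ∧
        c * (n : ℝ) ^ ((5 : ℝ) / 2) ≤ (S.card : ℝ) := by
  refine ⟨1/32, by norm_num, 1000, fun n hn => ?_⟩
  obtain ⟨s, hs⟩ : ∃ s, s = Nat.sqrt n := ⟨_, rfl⟩
  have hs31 : 31 ≤ s := by
    rw [hs]; exact Nat.le_sqrt.mpr (by omega)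
  have hssq : s ^ 2 ≤ n := by rw [hs]; exact Nat.sqrt_le' n
  have hnlt : n < (s + 1) ^ 2 := by rw [hs]; exact Nat.lt_succ_sqrt' n
  obtain ⟨m, hm⟩ : ∃ m, m = s / 4 := ⟨_, rfl⟩
  have hm7 : 7 ≤ m := by omega
  have h16n : 16 * m ^ 2 ≤ n := by
    have h4 : 4 * m ≤ s := by omega
    nlinarith
  obtain ⟨M, hM⟩ : ∃ M : ℤ, M = (m : ℤ) := ⟨_, rfl⟩
  have hM7 : (7 : ℤ) ≤ M := by rw [hM]; exact_mod_cast hm7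
  have h16' : 16 * M ^ 2 ≤ (n : ℤ) := by
    rw [hM]; exact_mod_cast h16n
  have hM7R : (7 : ℝ) ≤ (M : ℝ) := by exact_mod_cast hM7
  refine ⟨((4 * M ^ 2 : ℤ) : ℝ), by push_cast; nlinarith, ?_⟩
  set D : Finset (ℤ × ℤ × ℤ) :=
    (Finset.Icc 1 (M - 1)) ×ˢ ((Finset.Icc 1 ((n : ℤ) - 2 * M ^ 2)) ×ˢ
      (Finset.Icc (M ^ 2) ((n : ℤ) - M ^ 2))) with hD
  set f : ℤ × ℤ × ℤ → Finset (ℤ × ℤ) := fun w =>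
    {(w.2.1, w.2.2), (w.2.1 + 2 * M * w.1, w.2.2 + (M ^ 2 - w.1 ^ 2)),
      (w.2.1 + 2 * M * w.1, w.2.2 - (M ^ 2 - w.1 ^ 2))} with hf
  refine ⟨D.image f, ?_, ?_⟩
  · rintro T hT
    simp only [Finset.mem_image] at hT
    obtain ⟨⟨t, u, v⟩, hmem, rfl⟩ := hT
    simp only [hD, Finset.mem_product, Finset.mem_Icc] at hmem
    obtain ⟨⟨ht1, ht2⟩, ⟨hu1, hu2⟩, hv1, hv2⟩ := hmem
    have hMt : 7 ≤ M * t := by nlinarith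
    have ht2a : 1 ≤ t ^ 2 := by nlinarith
    have ht2b : t ^ 2 ≤ M ^ 2 - 1 := by nlinarith
    have h2Mtb : 2 * M * t ≤ 2 * M ^ 2 - 2 * M := by nlinarith
    have hM2 : 49 ≤ M ^ 2 := by nlinarith
    have hposc : 0 < M * t * (M ^ 2 - t ^ 2) := mul_pos (by nlinarith) (by linarith)
    refine ⟨(u, v), (u + 2 * M * t, v + (M ^ 2 - t ^ 2)),
      (u + 2 * M * t, v - (M ^ 2 - t ^ 2)), by simp [hf], ?_, ?_, ?_, ?_, ?_⟩
    · exact ⟨hu1, by linarith, by linarith, by linarith⟩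
    · refine ⟨by dsimp only; linarith, by dsimp only; linarith,
        by dsimp only; linarith, by dsimp only; linarith⟩
    · refine ⟨by dsimp only; linarith, by dsimp only; linarith,
        by dsimp only; linarith, by dsimp only; linarith⟩
    · dsimp only
      intro h
      nlinarith [hposc]
    · have d1 : latticeDist (u, v) (u + 2 * M * t, v + (M ^ 2 - t ^ 2)) =
          ((M ^ 2 + t ^ 2 : ℤ) : ℝ) := by
        apply latticeDist_eq _ _ _ (by nlinarith)
        dsimp only
        ring
      have d2 : latticeDist (u + 2 * M * t, v + (M ^ 2 - t ^ 2))
          (u + 2 * M * t, v - (M ^ 2 - t ^ 2)) = ((2 * (M ^ 2 - t ^ 2) : ℤ) : ℝ) := by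
        apply latticeDist_eq _ _ _ (by nlinarith)
        dsimp only
        ring
      have d3 : latticeDist (u + 2 * M * t, v - (M ^ 2 - t ^ 2)) (u, v) =
          ((M ^ 2 + t ^ 2 : ℤ) : ℝ) := by
        apply latticeDist_eq _ _ _ (by nlinarith)
        dsimp only
        ring
      rw [d1, d2, d3]
      push_cast
      ring
  · have hinj : Set.InjOn f D := by
      rintro ⟨t, u, v⟩ h1 ⟨t', u', v'⟩ h2 heq
      simp only [hD, Finset.mem_coe, Finset.mem_product, Finset.mem_Icc] at h1 h2
      obtain ⟨⟨ht1, ht2⟩, ⟨hu1, hu2⟩, hv1, hv2⟩ := h1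
      obtain ⟨⟨ht1', ht2'⟩, ⟨hu1', hu2'⟩, hv1', hv2'⟩ := h2
      have hMt : 0 < M * t := mul_pos (by linarith) (by linarith)
      have hMt' : 0 < M * t' := mul_pos (by linarith) (by linarith)
      have hA : ((u, v) : ℤ × ℤ) ∈ f (t', u', v') := by
        rw [← heq]; simp [hf]
      have hA' : ((u', v') : ℤ × ℤ) ∈ f (t, u, v) := by
        rw [heq]; simp [hf]
      simp only [hf, Finset.mem_insert, Finset.mem_singleton, Prod.mk.injEq] at hA hA'
      have huv : u = u' ∧ v = v' := by
        rcases hA with ⟨e1, e2⟩ | ⟨e1, e2⟩ | ⟨e1, e2⟩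
        · exact ⟨e1, e2⟩
        all_goals {
          exfalso
          rcases hA' with ⟨e1', e2'⟩ | ⟨e1', e2'⟩ | ⟨e1', e2'⟩ <;> linarith }
      obtain ⟨rfl, rfl⟩ := huv
      have hB : ((u + 2 * M * t, v + (M ^ 2 - t ^ 2)) : ℤ × ℤ) ∈ f (t', u, v) := by
        rw [← heq]; simp [hf]
      simp only [hf, Finset.mem_insert, Finset.mem_singleton, Prod.mk.injEq] at hB
      have htt : t = t' := by
        have hM0 : M ≠ 0 := by omega
        rcases hB with ⟨e1, e2⟩ | ⟨e1, e2⟩ | ⟨e1, e2⟩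
        · exfalso; linarith
        · exact mul_left_cancel₀ hM0 (by linarith)
        · exact mul_left_cancel₀ hM0 (by linarith)
      subst htt
      rfl
    rw [Finset.card_image_of_injOn hinj]
    have hb : (0:ℤ) ≤ (n : ℤ) - 2 * M ^ 2 := by nlinarith
    have ha : (0:ℤ) ≤ M - 1 := by omega
    have c1 : (((Finset.Icc (1:ℤ) (M - 1)).card : ℕ) : ℝ) = (M:ℝ) - 1 := by
      rw [Int.card_Icc, show M - 1 + 1 - 1 = M - 1 by ring]
      exact_mod_cast Int.toNat_of_nonneg ha
    have c2 : (((Finset.Icc (1:ℤ) ((n:ℤ) - 2 * M ^ 2)).card : ℕ) : ℝ) =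
        (n:ℝ) - 2 * (M:ℝ) ^ 2 := by
      rw [Int.card_Icc, show (n:ℤ) - 2 * M ^ 2 + 1 - 1 = (n:ℤ) - 2 * M ^ 2 by ring]
      have h := congrArg ((Int.cast : ℤ → ℝ)) (Int.toNat_of_nonneg hb)
      push_cast at h
      linarith [h]
    have c3 : (((Finset.Icc (M ^ 2) ((n:ℤ) - M ^ 2)).card : ℕ) : ℝ) =
        (n:ℝ) - 2 * (M:ℝ) ^ 2 + 1 := by
      rw [Int.card_Icc, show (n:ℤ) - M ^ 2 + 1 - M ^ 2 = (n:ℤ) - 2 * M ^ 2 + 1 by ring]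
      have h := congrArg ((Int.cast : ℤ → ℝ))
        (Int.toNat_of_nonneg (show (0:ℤ) ≤ (n:ℤ) - 2 * M ^ 2 + 1 by omega))
      push_cast at h
      linarith [h]
    have hcard : (D.card : ℝ) = ((M:ℝ) - 1) * (((n:ℝ) - 2 * (M:ℝ) ^ 2) *
        ((n:ℝ) - 2 * (M:ℝ) ^ 2 + 1)) := by
      rw [hD, Finset.card_product, Finset.card_product]
      push_cast
      rw [c1, c2, c3]
    rw [hcard]
    have hsqrt : Real.sqrt n ≤ (s : ℝ) + 1 := by
      have h1 : (n : ℝ) ≤ ((s:ℝ) + 1) ^ 2 := by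
        have : (n : ℝ) < ((s:ℝ) + 1) ^ 2 := by exact_mod_cast hnlt
        linarith
      calc Real.sqrt n ≤ Real.sqrt (((s:ℝ)+1)^2) := Real.sqrt_le_sqrt h1
        _ = (s:ℝ) + 1 := Real.sqrt_sq (by positivity)
    have hsplit : (n : ℝ) ^ ((5 : ℝ) / 2) = (n:ℝ)^2 * Real.sqrt n := by
      rw [show ((5:ℝ)/2) = 2 + 1/2 by norm_num,
        Real.rpow_add (by positivity : (0:ℝ) < n), Real.sqrt_eq_rpow]
      norm_num
    rw [hsplit]
    have h8 : (s : ℝ) + 1 ≤ 8 * ((M : ℝ) - 1) := by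
      have h9 : (s : ℤ) + 9 ≤ 8 * M := by rw [hM]; exact_mod_cast (by omega : s + 9 ≤ 8 * m)
      have : ((s:ℤ) : ℝ) + 9 ≤ 8 * ((M:ℤ) : ℝ) := by exact_mod_cast h9
      push_cast at this ⊢
      linarith
    have hhalf : (n : ℝ) / 2 ≤ (n : ℝ) - 2 * (M:ℝ)^2 := by
      have : (16 : ℝ) * (M:ℝ)^2 ≤ (n : ℝ) := by exact_mod_cast h16'
      linarith
    have hM1 : (1:ℝ) ≤ (M:ℝ) := by exact_mod_cast (by omega : (1:ℤ) ≤ M)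
    have hn0 : (0:ℝ) ≤ (n:ℝ) := by positivity
    have hsq0 : (0:ℝ) ≤ Real.sqrt n := Real.sqrt_nonneg _
    have key : (n:ℝ)^2 * Real.sqrt n ≤ (n:ℝ)^2 * ((s:ℝ) + 1) :=
      mul_le_mul_of_nonneg_left hsqrt (by positivity)
    nlinarith [mul_le_mul_of_nonneg_left h8 (show (0:ℝ) ≤ (n:ℝ)^2 by positivity),
      mul_le_mul (mul_le_mul hhalf hhalf (by linarith) (by linarith))
        (le_refl ((M:ℝ) - 1)) (by linarith) (by nlinarith),
      sq_nonneg ((n:ℝ) - 2*(M:ℝ)^2)]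
end
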